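/- (Descent inequality, key step in Lemma 2.1) For every k ≥ 0, F(x^{k+1}, ε^{k+1}) ≤ F(x^k, ε^k) + (β/2)(α^k)² ‖x^k − x^{k−1}‖₂² − (β/2) ‖x^{k+1} − x^k‖₂². -/

import Mathlib

open Filter
open scoped BigOperators InnerProductSpace

noncomputable section

/-- Real n-dimensional Euclidean space. -/
abbrev Vec (n : ℕ) := EuclideanSpace ℝ (Fin n)

/-- The smoothed objective `F(x, ε) = f(x) + λ ∑ᵢ (|xᵢ| + εᵢ)^p`. -/
def Fobj (n : ℕ) (p lam : ℝ) (f : Vec n → ℝ) (z : Vec n) (ε : Fin n → ℝ) : ℝ :=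
  f z + lam * ∑ i, (|z i| + ε i) ^ p

/-- The merit function `ψ(x, y, ε) = F(x, ε) + (β/2)‖x − y‖²`. -/
def psiObj (n : ℕ) (p lam β : ℝ) (f : Vec n → ℝ) (z y : Vec n) (ε : Fin n → ℝ) : ℝ :=
  Fobj n p lam f z ε + β / 2 * ‖z - y‖ ^ 2

/-- The weighted-ℓ₁ subproblem objective at iteration `k`:
`⟨∇f(yₖ), z⟩ + (β/2)‖z − yₖ‖² + λ ∑ᵢ wᵢᵏ |zᵢ|` with `wᵢᵏ = p(|xᵢᵏ| + εᵢᵏ)^{p−1}`. -/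
def subObj (n : ℕ) (p lam β : ℝ) (f : Vec n → ℝ) (xk yk : Vec n) (εk : Fin n → ℝ)
    (z : Vec n) : ℝ :=
  ⟪gradient f yk, z⟫_ℝ + β / 2 * ‖z - yk‖ ^ 2
    + lam * ∑ i, (p * (|xk i| + εk i) ^ (p - 1)) * |z i|

/-- All the hypotheses of the EIRL1 algorithm (Algorithm 1) together with
Assumption 2.1.  The convention `x⁻¹ = x⁰` is encoded through truncated
subtraction on ℕ (`x (k-1) = x 0` for `k = 0`). -/
structure EIRL1 (n : ℕ) (p lam β Lf μ αbar : ℝ) (f : Vec n → ℝ)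
    (x y : ℕ → Vec n) (ε : ℕ → Fin n → ℝ) (α : ℕ → ℝ) : Prop where
  hn : 1 ≤ n
  hp0 : 0 < p
  hp1 : p < 1
  hlam : 0 < lam
  hμ0 : 0 < μ
  hμ1 : μ < 1
  hLf : 0 ≤ Lf
  hβ : Lf < β
  hconv : ConvexOn ℝ Set.univ f
  hdiff : ContDiff ℝ 1 f
  hlip : ∀ a b, ‖gradient f a - gradient f b‖ ≤ Lf * ‖a - b‖
  hαbar0 : 0 ≤ αbar
  hαbar1 : αbar < 1
  hα0 : ∀ k, 0 ≤ α k
  hα1 : ∀ k, α k ≤ αbar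
  hε0 : ∀ i, 0 < ε 0 i
  hεpos : ∀ k i, 0 < ε (k + 1) i
  hεdec : ∀ k i, ε (k + 1) i ≤ μ * ε k i
  hy : ∀ k, y k = x k + α k • (x k - x (k - 1))
  hmin : ∀ k z, z ≠ x (k + 1) →
    subObj n p lam β f (x k) (y k) (ε k) (x (k + 1)) < subObj n p lam β f (x k) (y k) (ε k) z
  hlevel : Bornology.IsBounded {z : Vec n | Fobj n p lam f z 0 ≤ Fobj n p lam f (x 0) (ε 0)}

lemma fderiv_eq_inner_gradient {n : ℕ} (f : Vec n → ℝ) (x v : Vec n) :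
    fderiv ℝ f x v = ⟪gradient f x, v⟫_ℝ := by
  unfold gradient
  rw [InnerProductSpace.toDual_symm_apply]

lemma rpow_tangent {p s t : ℝ} (hp0 : 0 < p) (hp1 : p < 1) (ht : 0 < t) (hs : 0 ≤ s) :
    s ^ p ≤ t ^ p + p * t ^ (p - 1) * (s - t) := by
  have hst : 0 ≤ s / t := div_nonneg hs ht.le
  have h1 : (1 + (s / t - 1)) ^ p ≤ 1 + p * (s / t - 1) :=
    rpow_one_add_le_one_add_mul_self (by linarith) hp0.le hp1.le
  have h2 : (1 : ℝ) + (s / t - 1) = s / t := by ring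
  rw [h2] at h1
  have h3 : s ^ p = t ^ p * (s / t) ^ p := by
    rw [← Real.mul_rpow ht.le hst]
    congr 1
    field_simp
  have h4 : t ^ (p - 1) = t ^ p / t := by
    rw [Real.rpow_sub ht, Real.rpow_one]
  have htp : 0 < t ^ p := Real.rpow_pos_of_pos ht p
  rw [h3, h4]
  have h5 := mul_le_mul_of_nonneg_left h1 htp.le
  calc t ^ p * (s / t) ^ p ≤ t ^ p * (1 + p * (s / t - 1)) := h5
    _ = t ^ p + p * (t ^ p / t) * (s - t) := by field_simp

lemma descent_lemma {n : ℕ} (f : Vec n → ℝ) (hf : ContDiff ℝ 1 f) {L : ℝ}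
    (hlip : ∀ a b : Vec n, ‖gradient f a - gradient f b‖ ≤ L * ‖a - b‖) (a b : Vec n) :
    f b ≤ f a + ⟪gradient f a, b - a⟫_ℝ + L / 2 * ‖b - a‖ ^ 2 := by
  set γ : ℝ → Vec n := fun t => a + t • (b - a) with hγdef
  have hγ : ∀ t : ℝ, HasDerivAt γ (b - a) t := by
    intro t
    rw [hγdef]
    simpa using ((hasDerivAt_id t).smul_const (b - a)).const_add a
  have hdiff : ∀ z : Vec n, DifferentiableAt ℝ f z :=
    fun z => (hf.differentiable one_ne_zero).differentiableAt
  have hφ : ∀ t : ℝ, HasDerivAt (fun s => f (γ s)) (⟪gradient f (γ t), b - a⟫_ℝ) t := by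
    intro t
    have h1 := (hdiff (γ t)).hasFDerivAt.comp_hasDerivAt t (hγ t)
    rwa [fderiv_eq_inner_gradient] at h1
  have hγc : Continuous γ := by fun_prop
  have hgc : Continuous fun t : ℝ => ⟪gradient f (γ t), b - a⟫_ℝ := by
    have h1 : Continuous fun z : Vec n => fderiv ℝ f z := hf.continuous_fderiv one_ne_zero
    have h2 : (fun t : ℝ => ⟪gradient f (γ t), b - a⟫_ℝ)
        = fun t : ℝ => fderiv ℝ f (γ t) (b - a) := by
      funext t; rw [fderiv_eq_inner_gradient]
    rw [h2]
    exact (ContinuousLinearMap.apply ℝ ℝ (b - a)).continuous.comp (h1.comp hγc)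
  have hFTC : ∫ t in (0:ℝ)..1, ⟪gradient f (γ t), b - a⟫_ℝ = f (γ 1) - f (γ 0) :=
    intervalIntegral.integral_eq_sub_of_hasDerivAt (fun t _ => hφ t)
      (hgc.intervalIntegrable 0 1)
  have hγ0 : γ 0 = a := by simp [hγdef]
  have hγ1 : γ 1 = b := by simp [hγdef]
  have hbound : ∀ t ∈ Set.Icc (0:ℝ) 1,
      ⟪gradient f (γ t), b - a⟫_ℝ ≤ ⟪gradient f a, b - a⟫_ℝ + L * t * ‖b - a‖ ^ 2 := by
    intro t ht
    have h1 : ⟪gradient f (γ t), b - a⟫_ℝ - ⟪gradient f a, b - a⟫_ℝ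
        = ⟪gradient f (γ t) - gradient f a, b - a⟫_ℝ := by
      rw [inner_sub_left]
    have h2 : ⟪gradient f (γ t) - gradient f a, b - a⟫_ℝ
        ≤ ‖gradient f (γ t) - gradient f a‖ * ‖b - a‖ := real_inner_le_norm _ _
    have h3 : ‖gradient f (γ t) - gradient f a‖ ≤ L * ‖γ t - a‖ := hlip _ _
    have h4 : ‖γ t - a‖ = t * ‖b - a‖ := by
      have : γ t - a = t • (b - a) := by simp [hγdef]
      rw [this, norm_smul, Real.norm_eq_abs, abs_of_nonneg ht.1]
    have h5 : ‖gradient f (γ t) - gradient f a‖ * ‖b - a‖ ≤ L * t * ‖b - a‖ ^ 2 := by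
      rw [h4] at h3
      calc ‖gradient f (γ t) - gradient f a‖ * ‖b - a‖ ≤ (L * (t * ‖b - a‖)) * ‖b - a‖ :=
            mul_le_mul_of_nonneg_right h3 (norm_nonneg _)
        _ = L * t * ‖b - a‖ ^ 2 := by ring
    linarith
  have hint : ∫ t in (0:ℝ)..1, ⟪gradient f (γ t), b - a⟫_ℝ
      ≤ ∫ t in (0:ℝ)..1, (⟪gradient f a, b - a⟫_ℝ + L * t * ‖b - a‖ ^ 2) := by
    apply intervalIntegral.integral_mono_on zero_le_one (hgc.intervalIntegrable 0 1)
    · exact (Continuous.intervalIntegrable (by fun_prop) 0 1)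
    · exact hbound
  have hval : ∫ t in (0:ℝ)..1, (⟪gradient f a, b - a⟫_ℝ + L * t * ‖b - a‖ ^ 2)
      = ⟪gradient f a, b - a⟫_ℝ + L / 2 * ‖b - a‖ ^ 2 := by
    rw [intervalIntegral.integral_add (intervalIntegrable_const)
      (Continuous.intervalIntegrable (by fun_prop) 0 1)]
    have : ∫ t in (0:ℝ)..1, L * t * ‖b - a‖ ^ 2 = L / 2 * ‖b - a‖ ^ 2 := by
      have h6 : (fun t : ℝ => L * t * ‖b - a‖ ^ 2) = fun t : ℝ => (L * ‖b - a‖ ^ 2) * t := by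
        funext t; ring
      rw [h6, intervalIntegral.integral_const_mul, integral_id]
      ring
    rw [this]
    simp
  rw [hγ0, hγ1] at hFTC
  rw [hval] at hint
  linarith [hFTC ▸ hint]

lemma convex_tangent {n : ℕ} (f : Vec n → ℝ) (hconv : ConvexOn ℝ Set.univ f)
    (hf : ContDiff ℝ 1 f) (a b : Vec n) :
    f a + ⟪gradient f a, b - a⟫_ℝ ≤ f b := by
  set g : ℝ → ℝ := fun t => f (a + t • (b - a)) with hgdef
  have hγ : ∀ t : ℝ, HasDerivAt (fun s : ℝ => a + s • (b - a)) (b - a) t := by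
    intro t
    simpa using ((hasDerivAt_id t).smul_const (b - a)).const_add a
  have hg0 : HasDerivAt g (⟪gradient f a, b - a⟫_ℝ) 0 := by
    have hd : DifferentiableAt ℝ f (a + (0:ℝ) • (b - a)) :=
      (hf.differentiable one_ne_zero).differentiableAt
    have h1 := hd.hasFDerivAt.comp_hasDerivAt 0 (hγ 0)
    rw [fderiv_eq_inner_gradient] at h1
    simpa [hgdef, Function.comp_def] using h1
  have hslope : Filter.Tendsto (slope g 0) (nhdsWithin 0 (Set.Ioi 0))
      (nhds (⟪gradient f a, b - a⟫_ℝ)) :=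
    (hasDerivAt_iff_tendsto_slope.mp hg0).mono_left
      (nhdsWithin_mono 0 (fun t ht => ne_of_gt ht))
  have hub : ∀ᶠ t in nhdsWithin (0:ℝ) (Set.Ioi 0), slope g 0 t ≤ g 1 - g 0 := by
    filter_upwards [Ioc_mem_nhdsGT_of_mem (Set.mem_Ico.mpr ⟨le_refl (0:ℝ), zero_lt_one⟩)]
      with t ht
    have ht0 : 0 < t := ht.1
    have ht1 : t ≤ 1 := ht.2
    have hcvx : g t ≤ (1 - t) * g 0 + t * g 1 := by
      have h2 : (1 - t) • a + t • b = a + t • (b - a) := by module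
      have h3 := hconv.2 (Set.mem_univ a) (Set.mem_univ b)
        (by linarith : (0:ℝ) ≤ 1 - t) ht0.le (by ring)
      rw [h2] at h3
      simpa [hgdef] using h3
    rw [slope_def_field, sub_zero, div_le_iff₀ ht0]
    nlinarith
  have := le_of_tendsto hslope hub
  have hg1 : g 1 = f b := by simp [hgdef]
  have hg0' : g 0 = f a := by simp [hgdef]
  rw [hg1, hg0'] at this
  linarith

lemma norm_combo_sq {n : ℕ} (u v : Vec n) (t : ℝ) :
    ‖(1 - t) • u + t • v‖ ^ 2
      = (1 - t) * ‖u‖ ^ 2 + t * ‖v‖ ^ 2 - t * (1 - t) * ‖v - u‖ ^ 2 := by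
  rw [← real_inner_self_eq_norm_sq, ← real_inner_self_eq_norm_sq,
    ← real_inner_self_eq_norm_sq, ← real_inner_self_eq_norm_sq]
  simp only [inner_add_left, inner_add_right, inner_sub_left, inner_sub_right,
    real_inner_smul_left, real_inner_smul_right]
  rw [real_inner_comm v u]
  ring

lemma strong_min {n : ℕ} {β : ℝ} (hβ : 0 < β) (c : Vec n → ℝ)
    (hc : ∀ u v : Vec n, ∀ t : ℝ, 0 ≤ t → t ≤ 1 →
      c ((1 - t) • u + t • v) ≤ (1 - t) * c u + t * c v)
    (y xs : Vec n)
    (hmin : ∀ z, z ≠ xs → c xs + β / 2 * ‖xs - y‖ ^ 2 < c z + β / 2 * ‖z - y‖ ^ 2)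
    (z : Vec n) :
    c xs + β / 2 * ‖xs - y‖ ^ 2 + β / 2 * ‖z - xs‖ ^ 2 ≤ c z + β / 2 * ‖z - y‖ ^ 2 := by
  by_cases hz : z = xs
  · simp [hz]
  have hle : ∀ w, c xs + β / 2 * ‖xs - y‖ ^ 2 ≤ c w + β / 2 * ‖w - y‖ ^ 2 := by
    intro w
    by_cases hw : w = xs
    · simp [hw]
    · exact (hmin w hw).le
  set E : ℝ := (c z + β / 2 * ‖z - y‖ ^ 2) - (c xs + β / 2 * ‖xs - y‖ ^ 2) with hE
  set B : ℝ := β / 2 * ‖z - xs‖ ^ 2 with hB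
  have hE0 : 0 ≤ E := by have := hle z; simp [hE]; linarith
  have hB0 : 0 ≤ B := by positivity
  have hbound : ∀ t : ℝ, 0 < t → t ≤ 1 → B - B * t ≤ E := by
    intro t ht0 ht1
    set zt : Vec n := (1 - t) • xs + t • z with hzt
    have hne : zt ≠ xs := by
      intro h
      apply hz
      have h2 : t • (z - xs) = 0 := by
        have : zt - xs = t • (z - xs) := by rw [hzt]; module
        rw [h] at this; rw [← this]; simp
      rcases smul_eq_zero.mp h2 with h3 | h3
      · exact absurd h3 (ne_of_gt ht0)
      · exact (sub_eq_zero.mp h3)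
    have h1 := hle zt
    have h2 := hc xs z t ht0.le ht1
    have h3 : ‖zt - y‖ ^ 2 = (1 - t) * ‖xs - y‖ ^ 2 + t * ‖z - y‖ ^ 2
        - t * (1 - t) * ‖z - xs‖ ^ 2 := by
      have h4 : zt - y = (1 - t) • (xs - y) + t • (z - y) := by rw [hzt]; module
      have h5 : (z - y) - (xs - y) = z - xs := by module
      rw [h4, norm_combo_sq, h5]
    rw [h3] at h1
    have h6 : 0 ≤ t * (E - (B - B * t)) := by
      simp only [hE, hB] at *
      nlinarith [h1, h2]
    nlinarith [h6, ht0]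
  by_contra hcon
  push_neg at hcon
  have hEB : E < B := by simp only [hE, hB] at *; linarith
  have hBpos : 0 < B := lt_of_le_of_lt hE0 hEB
  have ht0 : 0 < (B - E) / (2 * B) := div_pos (by linarith) (by linarith)
  have ht1 : (B - E) / (2 * B) ≤ 1 := by
    rw [div_le_one (by positivity)]; linarith
  have := hbound _ ht0 ht1
  have hcontr : B - B * ((B - E) / (2 * B)) = (B + E) / 2 := by
    field_simp; ring
  rw [hcontr] at this
  linarith

/-- Descent inequality (key step in Lemma 2.1):
`F(xᵏ⁺¹, εᵏ⁺¹) ≤ F(xᵏ, εᵏ) + (β/2)(αᵏ)²‖xᵏ − xᵏ⁻¹‖² − (β/2)‖xᵏ⁺¹ − xᵏ‖²`. -/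
theorem stmt_4 (n : ℕ) (p lam β Lf μ αbar : ℝ) (f : Vec n → ℝ)
    (x y : ℕ → Vec n) (ε : ℕ → Fin n → ℝ) (α : ℕ → ℝ)
    (H : EIRL1 n p lam β Lf μ αbar f x y ε α) :
    ∀ k, Fobj n p lam f (x (k + 1)) (ε (k + 1))
        ≤ Fobj n p lam f (x k) (ε k) + β / 2 * (α k) ^ 2 * ‖x k - x (k - 1)‖ ^ 2
          - β / 2 * ‖x (k + 1) - x k‖ ^ 2 := by
  obtain ⟨hn, hp0, hp1, hlam, hμ0, hμ1, hLf, hβ, hconv, hdiff, hlip, hαbar0, hαbar1,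
    hα0, hα1, hε0, hεpos, hεdec, hy, hmin, hlevel⟩ := H
  intro k
  set a : Vec n := x k with ha
  set b : Vec n := x (k + 1) with hb
  set yk : Vec n := y k with hyk
  set g : Vec n := gradient f yk with hg
  set w : Fin n → ℝ := fun i => p * (|a i| + ε k i) ^ (p - 1) with hw
  have hεk : ∀ i, 0 < ε k i := by
    cases k with
    | zero => exact hε0
    | succ m => exact hεpos m
  have hwpos : ∀ i, 0 ≤ w i := by
    intro i
    have : (0:ℝ) < (|a i| + ε k i) ^ (p - 1) :=
      Real.rpow_pos_of_pos (by have := abs_nonneg (a i); have := hεk i; linarith) _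
    simp only [hw]
    positivity
  set c : Vec n → ℝ := fun z => ⟪g, z⟫_ℝ + lam * ∑ i, w i * |z i| with hc
  have hcconv : ∀ u v : Vec n, ∀ t : ℝ, 0 ≤ t → t ≤ 1 →
      c ((1 - t) • u + t • v) ≤ (1 - t) * c u + t * c v := by
    intro u v t ht0 ht1
    simp only [hc]
    have hinner : ⟪g, (1 - t) • u + t • v⟫_ℝ = (1 - t) * ⟪g, u⟫_ℝ + t * ⟪g, v⟫_ℝ := by
      rw [inner_add_right, real_inner_smul_right, real_inner_smul_right]
    have habs : ∀ i ∈ Finset.univ, w i * |((1 - t) • u + t • v) i|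
        ≤ (1 - t) * (w i * |u i|) + t * (w i * |v i|) := by
      intro i _
      have hcoord : ((1 - t) • u + t • v) i = (1 - t) * u i + t * v i := by
        simp [PiLp.add_apply, PiLp.smul_apply, smul_eq_mul]
      rw [hcoord]
      have h1 : |(1 - t) * u i + t * v i| ≤ (1 - t) * |u i| + t * |v i| := by
        calc |(1 - t) * u i + t * v i| ≤ |(1 - t) * u i| + |t * v i| := abs_add_le _ _
          _ = (1 - t) * |u i| + t * |v i| := by
              rw [abs_mul, abs_mul, abs_of_nonneg (by linarith : (0:ℝ) ≤ 1 - t),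
                abs_of_nonneg ht0]
      have h2 := mul_le_mul_of_nonneg_left h1 (hwpos i)
      linarith [h2]
    have hsum := Finset.sum_le_sum habs
    rw [Finset.sum_add_distrib, ← Finset.mul_sum, ← Finset.mul_sum] at hsum
    have hsum2 := mul_le_mul_of_nonneg_left hsum hlam.le
    rw [hinner]
    linarith [hsum2]
  have hsub : ∀ z : Vec n, subObj n p lam β f a yk (ε k) z = c z + β / 2 * ‖z - yk‖ ^ 2 := by
    intro z
    simp only [subObj, hc, hw, hg]
    ring
  have hminc : ∀ z, z ≠ b → c b + β / 2 * ‖b - yk‖ ^ 2 < c z + β / 2 * ‖z - yk‖ ^ 2 := by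
    intro z hz
    have h0 := hmin k z (by rw [← hb]; exact hz)
    rw [← ha, ← hb, ← hyk] at h0
    rwa [hsub, hsub] at h0
  have S1 := strong_min (lt_of_le_of_lt hLf hβ) c hcconv yk b hminc a
  have S2 := descent_lemma f hdiff hlip yk b
  have S3 := convex_tangent f hconv hdiff yk a
  have hεle : ∀ i, ε (k + 1) i ≤ ε k i := by
    intro i
    have h1 := hεdec k i
    nlinarith [hεk i]
  have S4 : ∀ i ∈ Finset.univ, (|b i| + ε (k + 1) i) ^ p
      ≤ (|a i| + ε k i) ^ p + (w i * |b i| - w i * |a i|) := by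
    intro i _
    have ht : (0:ℝ) < |a i| + ε k i := by
      have := abs_nonneg (a i); have := hεk i; linarith
    have hs : (0:ℝ) ≤ |b i| + ε (k + 1) i := by
      have := abs_nonneg (b i); have := (hεpos k i).le; linarith
    have h1 := rpow_tangent hp0 hp1 ht hs
    have h2 : w i * (ε (k + 1) i - ε k i) ≤ 0 :=
      mul_nonpos_of_nonneg_of_nonpos (hwpos i) (by linarith [hεle i])
    have h3 : p * (|a i| + ε k i) ^ (p - 1) = w i := by rw [hw]
    rw [h3] at h1
    linarith [h1, h2]
  have S4sum := Finset.sum_le_sum S4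
  rw [Finset.sum_add_distrib, Finset.sum_sub_distrib] at S4sum
  have S4lam := mul_le_mul_of_nonneg_left S4sum hlam.le
  have hI1 : ⟪g, b - yk⟫_ℝ = ⟪g, b⟫_ℝ - ⟪g, yk⟫_ℝ := inner_sub_right _ _ _
  have hI2 : ⟪g, a - yk⟫_ℝ = ⟪g, a⟫_ℝ - ⟪g, yk⟫_ℝ := inner_sub_right _ _ _
  have hay : ‖a - yk‖ ^ 2 = (α k) ^ 2 * ‖a - x (k - 1)‖ ^ 2 := by
    have h1 : a - yk = -(α k • (a - x (k - 1))) := by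
      rw [hyk, hy k, ← ha]; module
    rw [h1, norm_neg, norm_smul, Real.norm_eq_abs, abs_of_nonneg (hα0 k), mul_pow]
  have hab : ‖a - b‖ = ‖b - a‖ := norm_sub_rev _ _
  have hNb : (0:ℝ) ≤ ‖b - yk‖ ^ 2 := sq_nonneg _
  have hβ' : Lf ≤ β := hβ.le
  simp only [Fobj]
  simp only [hc] at S1
  rw [hI1] at S2
  rw [hI2] at S3
  rw [hab, hay] at S1
  have hdrop : (0:ℝ) ≤ (β - Lf) * ‖b - yk‖ ^ 2 :=
    mul_nonneg (by linarith) hNb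
  have hgoal : f b + lam * ∑ i, (|b i| + ε (k + 1) i) ^ p
      ≤ f a + lam * ∑ i, (|a i| + ε k i) ^ p
        + β / 2 * (α k) ^ 2 * ‖a - x (k - 1)‖ ^ 2 - β / 2 * ‖b - a‖ ^ 2 := by
    linarith [S1, S2, S3, S4lam, hdrop]
  exact hgoal
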